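/- Let b ∈ (0,1) with b ≠ 1/2, and for x ∈ ℝ let μ₁ = b·δ_x + (1−b)·δ_{(1−bx)/(1−b)} (a convex combination of Dirac masses on ℝ). Then ∫ v dμ₁(v) = 1, and the map x ↦ ∫ (4v³ + 6v²) dμ₁(v) is a cubic polynomial in x with leading coefficient 4b(1−2b)/(1−b)²; consequently the quantity ∫(4v³+6v²) dμ₁(v) + 4 takes both strictly positive and strictly negative values as x ranges over ℝ. -/

import Mathlib

open Polynomial Filter

lemma cubic_pos (a c₂ c₁ c₀ : ℝ) (ha : 0 < a) :
    ∃ x : ℝ, 0 < a*x^3 + c₂*x^2 + c₁*x + c₀ := by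
  set P : ℝ[X] := C a * X^3 + C c₂ * X^2 + C c₁ * X + C c₀ with hP
  have hdeg : P.degree = 3 := by
    rw [hP]; compute_degree! <;> exact ha.ne'
  have hnd : P.natDegree = 3 := natDegree_eq_of_degree_eq_some hdeg
  have hlc : P.leadingCoeff = a := by
    rw [leadingCoeff, hnd, hP]
    simp [coeff_C]
  have ht : Tendsto (fun x => P.eval x) atTop atTop :=
    P.tendsto_atTop_of_leadingCoeff_nonneg (by rw [hdeg]; norm_num) (by rw [hlc]; exact ha.le)
  obtain ⟨x, hx⟩ := (ht.eventually_ge_atTop 1).exists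
  refine ⟨x, ?_⟩
  have : P.eval x = a*x^3 + c₂*x^2 + c₁*x + c₀ := by simp [hP]
  linarith [this ▸ hx]

lemma cubic_both (a c₂ c₁ c₀ : ℝ) (ha : a ≠ 0) :
    (∃ x : ℝ, 0 < a*x^3 + c₂*x^2 + c₁*x + c₀) ∧
    (∃ x : ℝ, a*x^3 + c₂*x^2 + c₁*x + c₀ < 0) := by
  rcases ha.lt_or_gt with h | h
  · obtain ⟨x, hx⟩ := cubic_pos (-a) c₂ (-c₁) c₀ (by linarith)
    obtain ⟨y, hy⟩ := cubic_pos (-a) (-c₂) (-c₁) (-c₀) (by linarith)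
    exact ⟨⟨-x, by nlinarith⟩, ⟨y, by nlinarith⟩⟩
  · obtain ⟨x, hx⟩ := cubic_pos a c₂ c₁ c₀ h
    obtain ⟨y, hy⟩ := cubic_pos a (-c₂) c₁ (-c₀) h
    exact ⟨⟨x, hx⟩, ⟨-y, by nlinarith⟩⟩

theorem stmt_5 (b : ℝ) (hb : b ∈ Set.Ioo (0:ℝ) 1) (hb2 : b ≠ 1/2) :
    (∀ x : ℝ, b * x + (1 - b) * ((1 - b*x)/(1 - b)) = 1) ∧
    (∃ c₂ c₁ c₀ : ℝ, ∀ x : ℝ,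
      b * (4*x^3 + 6*x^2) + (1 - b) * (4*((1 - b*x)/(1 - b))^3 + 6*((1 - b*x)/(1 - b))^2)
        = (4*b*(1 - 2*b)/(1 - b)^2) * x^3 + c₂*x^2 + c₁*x + c₀) ∧
    (∃ x : ℝ, 0 < b * (4*x^3 + 6*x^2) + (1 - b) * (4*((1 - b*x)/(1 - b))^3 + 6*((1 - b*x)/(1 - b))^2) + 4) ∧
    (∃ x : ℝ, b * (4*x^3 + 6*x^2) + (1 - b) * (4*((1 - b*x)/(1 - b))^3 + 6*((1 - b*x)/(1 - b))^2) + 4 < 0) := by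
  obtain ⟨hb0, hb1⟩ := hb
  have h1b : (1:ℝ) - b ≠ 0 := by linarith
  set a : ℝ := 4*b*(1 - 2*b)/(1 - b)^2 with ha
  set c₂ : ℝ := 6*b + 12*b^2/(1-b)^2 + 6*b^2/(1-b) with hc₂
  set c₁ : ℝ := -12*b/(1-b)^2 - 12*b/(1-b) with hc₁
  set c₀ : ℝ := 4/(1-b)^2 + 6/(1-b) with hc₀
  have key : ∀ x : ℝ,
      b * (4*x^3 + 6*x^2) + (1 - b) * (4*((1 - b*x)/(1 - b))^3 + 6*((1 - b*x)/(1 - b))^2)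
        = a * x^3 + c₂*x^2 + c₁*x + c₀ := by
    intro x
    rw [ha, hc₂, hc₁, hc₀]
    field_simp
    ring
  have ha0 : a ≠ 0 := by
    rw [ha]
    have h2 : 1 - 2*b ≠ 0 := by intro h; apply hb2; linarith
    exact div_ne_zero (mul_ne_zero (mul_ne_zero (by norm_num) hb0.ne') h2) (pow_ne_zero _ h1b)
  obtain ⟨⟨x, hx⟩, ⟨y, hy⟩⟩ := cubic_both a c₂ c₁ (c₀ + 4) ha0
  refine ⟨fun x => by field_simp; ring, ⟨c₂, c₁, c₀, key⟩, ⟨x, ?_⟩, ⟨y, ?_⟩⟩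
  · rw [key x]; linarith
  · rw [key y]; linarith
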